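/- arXiv:2111.05030 — 3 statements merged into one kernel-verified Lean document; each statement's English description precedes it below -/
import Mathlib

section
/- For every integer r ≥ 1, Var(μ^(r)) ≤ b²·λ(r). -/
open Filter Topology MeasureTheory

noncomputable section

/-- Sum of the base-`b` digits of `n`. -/
def digitSum (b n : ℕ) : ℕ := (Nat.digits b n).sum

/-- `Δ^(r)(n) = s(n+r) - s(n)`, the variation of the base-`b` digit sum when adding `r`. -/
def delta (b r n : ℕ) : ℤ := (digitSum b (n + r) : ℤ) - (digitSum b n : ℤ)

/-- Number of non-zero blocks of a digit list (least significant digit first). -/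
def nzBlockCount (b : ℕ) : List ℕ → ℕ
  | [] => 0
  | [d] => if d = 0 then 0 else 1
  | d :: e :: l =>
      (if d = e ∧ (d = 0 ∨ d = b - 1) then 0 else if d = 0 then 0 else 1) + nzBlockCount b (e :: l)

/-- `λ(r)`: the number of non-zero blocks in the base-`b` expansion of `r`. -/
def lamb (b r : ℕ) : ℕ := nzBlockCount b (Nat.digits b r)

lemma digitSum_def {b : ℕ} (hb : 2 ≤ b) (n : ℕ) :
    digitSum b n = n % b + digitSum b (n / b) := by
  rcases Nat.eq_zero_or_pos n with h | h
  · simp [h, digitSum]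
  · rw [digitSum, Nat.digits_def' (by omega : 1 < b) h]
    simp [digitSum]

lemma digitSum_add_base_mul {b : ℕ} (hb : 2 ≤ b) {a : ℕ} (k : ℕ) (ha : a < b) :
    digitSum b (a + b * k) = a + digitSum b k := by
  rw [digitSum_def hb (a + b * k)]
  congr 1
  · rw [Nat.add_mul_mod_self_left, Nat.mod_eq_of_lt ha]
  · congr 1
    rw [Nat.add_mul_div_left _ _ (by omega : 0 < b), Nat.div_eq_of_lt ha, Nat.zero_add]

lemma digitSum_le_self {b : ℕ} (hb : 2 ≤ b) (n : ℕ) : digitSum b n ≤ n :=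
  Nat.digit_sum_le b n

lemma digitSum_pow_add {b : ℕ} (hb : 2 ≤ b) : ∀ (m : ℕ) (x : ℕ), x < b ^ m →
    digitSum b (b ^ m + x) = 1 + digitSum b x := by
  intro m
  induction m with
  | zero =>
    intro x hx
    have hx0 : x = 0 := by simpa using hx
    subst hx0
    simp [digitSum, Nat.digits_def' (by omega : 1 < b) (by omega : 0 < 1),
      Nat.mod_eq_of_lt (by omega : 1 < b), Nat.div_eq_of_lt (by omega : 1 < b)]
  | succ m ih =>
    intro x hx
    have hx' : x % b + b * (x / b) = x := by
      have := Nat.div_add_mod x b; omega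
    have h1 : b ^ (m+1) + x = (x % b) + b * (b ^ m + x / b) := by
      rw [pow_succ]; nlinarith [hx']
    rw [h1, digitSum_add_base_mul hb _ (Nat.mod_lt _ (by omega)),
      ih _ (by
        have : x < b * b ^ m := by rw [mul_comm, ← pow_succ]; exact hx
        exact Nat.div_lt_of_lt_mul (by omega))]
    conv_rhs => rw [← hx']
    rw [digitSum_add_base_mul hb _ (Nat.mod_lt _ (by omega))]
    omega

lemma sum_shift_mod {M : Type*} [AddCommMonoid M] (f : ℕ → M) (N t : ℕ) (hN : 0 < N) :
    ∑ n ∈ Finset.range N, f ((n + t) % N) = ∑ n ∈ Finset.range N, f n := by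
  have key : ∀ a : ℕ, (a + (N - t % N) + t) % N = a % N := by
    intro a
    have hmd := Nat.mod_add_div t N
    have hlt : t % N < N := Nat.mod_lt _ hN
    have h : a + (N - t % N) + t = a + N * (1 + t / N) := by
      have : N * (1 + t / N) = N + N * (t/N) := by ring
      omega
    rw [h, Nat.add_mul_mod_self_left]
  refine Finset.sum_nbij' (fun n => (n + t) % N) (fun n => (n + (N - t % N)) % N) ?_ ?_ ?_ ?_ ?_
  · intro a _; exact Finset.mem_range.2 (Nat.mod_lt _ hN)
  · intro a _; exact Finset.mem_range.2 (Nat.mod_lt _ hN)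
  · intro a ha
    rw [Nat.mod_add_mod, show a + t + (N - t % N) = a + (N - t % N) + t by ring, key,
      Nat.mod_eq_of_lt (Finset.mem_range.1 ha)]
  · intro a ha
    rw [Nat.mod_add_mod, key, Nat.mod_eq_of_lt (Finset.mem_range.1 ha)]
  · intro a _; rfl

lemma mod_mul_helper {b β : ℕ} (u : ℕ) (hu : u < b) (hβ : 0 < β) (X : ℕ) :
    (u + b * X) % (b * β) = u + b * (X % β) := by
  conv_lhs => rw [← Nat.div_add_mod X β]
  rw [show u + b * (β * (X/β) + X % β) = (u + b * (X % β)) + (b*β) * (X/β) by ring,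
      Nat.add_mul_mod_self_left]
  apply Nat.mod_eq_of_lt
  have h1 : X % β + 1 ≤ β := Nat.mod_lt X hβ
  have h2 : b * (X % β + 1) ≤ b * β := Nat.mul_le_mul_left _ h1
  have h3 : b * (X % β + 1) = b * (X % β) + b := by ring
  omega


def Acyc (b m t : ℕ) : ℤ :=
  ∑ n ∈ Finset.range (b ^ m), ((digitSum b ((n + t) % b ^ m) : ℤ) - digitSum b n) ^ 2

lemma Acyc_mean (b m t : ℕ) (hb : 2 ≤ b) :
    ∑ n ∈ Finset.range (b ^ m), ((digitSum b ((n + t) % b ^ m) : ℤ) - digitSum b n) = 0 := by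
  rw [Finset.sum_sub_distrib]
  rw [sum_shift_mod (fun n => (digitSum b n : ℤ)) (b^m) t (by positivity)]
  ring

lemma Acyc_rec {b : ℕ} (hb : 2 ≤ b) (m t : ℕ) :
    Acyc b (m+1) t = (b:ℤ)^m * (((b:ℤ) - (t % b : ℕ)) * ((t % b : ℕ):ℤ)^2
        + ((t % b : ℕ):ℤ) * ((b:ℤ) - (t % b : ℕ))^2)
      + ((b:ℤ) - (t % b : ℕ)) * Acyc b m (t / b) + ((t % b : ℕ):ℤ) * Acyc b m (t / b + 1) := by
  have hbpos : 0 < b := by omega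
  have hβpos : 0 < b ^ m := by positivity
  have hbb : b ^ (m+1) = b * b ^ m := pow_succ' b m
  set t₀ := t % b with ht₀
  set t' := t / b with ht'
  have ht₀lt : t₀ < b := Nat.mod_lt _ hbpos
  have h1 : Acyc b (m+1) t = ∑ n₀ ∈ Finset.range b, ∑ n' ∈ Finset.range (b^m),
      ((digitSum b ((n₀ + b * n' + t) % b ^ (m+1)) : ℤ) - digitSum b (n₀ + b * n')) ^ 2 := by
    have h0 : Acyc b (m+1) t = ∑ p ∈ Finset.range b ×ˢ Finset.range (b^m),
        ((digitSum b ((p.1 + b * p.2 + t) % b ^ (m+1)) : ℤ) - digitSum b (p.1 + b * p.2)) ^ 2 := by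
      rw [Acyc]
      refine Finset.sum_nbij' (fun n => (n % b, n / b)) (fun p => p.1 + b * p.2) ?_ ?_ ?_ ?_ ?_
      · intro a ha
        simp only [Finset.mem_product, Finset.mem_range] at *
        refine ⟨Nat.mod_lt _ hbpos, ?_⟩
        rw [hbb] at ha
        exact Nat.div_lt_of_lt_mul ha
      · intro p hp
        simp only [Finset.mem_product, Finset.mem_range] at *
        rw [hbb]
        have h2 : b * (p.2 + 1) ≤ b * b^m := Nat.mul_le_mul_left _ hp.2
        have h3 : b * (p.2 + 1) = b * p.2 + b := by ring
        omega
      · intro a _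
        simp only
        rw [Nat.mod_add_div]
      · intro p hp
        simp only [Finset.mem_product, Finset.mem_range] at hp
        have h2 : (p.1 + b * p.2) % b = p.1 := by
          rw [Nat.add_mul_mod_self_left, Nat.mod_eq_of_lt hp.1]
        have h3 : (p.1 + b * p.2) / b = p.2 := by
          rw [Nat.add_mul_div_left _ _ hbpos, Nat.div_eq_of_lt hp.1, Nat.zero_add]
        simp [h2, h3]
      · intro a _
        simp only
        rw [Nat.mod_add_div]
    rw [h0, Finset.sum_product]
  have hinner : ∀ n₀ < b, ∑ n' ∈ Finset.range (b^m),
      ((digitSum b ((n₀ + b * n' + t) % b ^ (m+1)) : ℤ) - digitSum b (n₀ + b * n')) ^ 2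
      = (b:ℤ)^m * (((t₀:ℤ) - b * ((n₀ + t₀)/b : ℕ)))^2 + Acyc b m (t' + (n₀ + t₀)/b) := by
    intro n₀ hn₀
    set ε := (n₀ + t₀) / b with hε
    set u := (n₀ + t₀) % b with hu
    have hulf : u + b * ε = n₀ + t₀ := Nat.mod_add_div _ _
    have hult : u < b := Nat.mod_lt _ hbpos
    have hcast : (u : ℤ) - n₀ = (t₀:ℤ) - b * ε := by
      have := congrArg (Nat.cast : ℕ → ℤ) hulf
      push_cast at this
      linarith
    have hterm : ∀ n' ∈ Finset.range (b^m),
        ((digitSum b ((n₀ + b * n' + t) % b ^ (m+1)) : ℤ) - digitSum b (n₀ + b * n')) ^ 2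
        = ((((t₀:ℤ) - b * ε)) + ((digitSum b ((n' + (t' + ε)) % b^m) : ℤ) - digitSum b n'))^2 := by
      intro n' hn'
      have hX : n₀ + b * n' + t = u + b * (n' + (t' + ε)) := by
        have hd : t₀ + b * t' = t := Nat.mod_add_div _ _
        have h4 : b * (n' + (t' + ε)) = b * n' + b * t' + b * ε := by ring
        omega
      rw [hX, hbb, mod_mul_helper u hult hβpos _,
        digitSum_add_base_mul hb _ hult, digitSum_add_base_mul hb _ hn₀]
      push_cast
      congr 1
      push_cast
      linarith [hcast]
    rw [Finset.sum_congr rfl hterm]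
    have hexp : ∀ n' ∈ Finset.range (b^m),
        ((((t₀:ℤ) - b * ε)) + ((digitSum b ((n' + (t' + ε)) % b^m) : ℤ) - digitSum b n'))^2
        = (((t₀:ℤ) - b * ε))^2
          + 2 * (((t₀:ℤ) - b * ε)) * ((digitSum b ((n' + (t' + ε)) % b^m) : ℤ) - digitSum b n')
          + ((digitSum b ((n' + (t' + ε)) % b^m) : ℤ) - digitSum b n')^2 := by
      intro n' _; ring
    rw [Finset.sum_congr rfl hexp, Finset.sum_add_distrib, Finset.sum_add_distrib,
      Finset.sum_const, ← Finset.mul_sum, Acyc_mean b m (t' + ε) hb]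
    rw [show Acyc b m (t' + ε) = ∑ n' ∈ Finset.range (b^m),
      ((digitSum b ((n' + (t' + ε)) % b^m) : ℤ) - digitSum b n')^2 from rfl]
    simp only [Finset.card_range, nsmul_eq_mul, mul_zero, add_zero]
    push_cast
    ring
  rw [h1, Finset.sum_congr rfl (fun n₀ hn₀ => hinner n₀ (Finset.mem_range.1 hn₀))]
  have hcase : ∀ n₀ ∈ Finset.range b,
      (b:ℤ)^m * (((t₀:ℤ) - b * ((n₀ + t₀)/b : ℕ)))^2 + Acyc b m (t' + (n₀ + t₀)/b)
      = if n₀ + t₀ < b then (b:ℤ)^m * (t₀:ℤ)^2 + Acyc b m t'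
        else (b:ℤ)^m * ((b:ℤ) - t₀)^2 + Acyc b m (t' + 1) := by
    intro n₀ hn₀
    have hn₀' : n₀ < b := Finset.mem_range.1 hn₀
    by_cases h : n₀ + t₀ < b
    · rw [if_pos h, Nat.div_eq_of_lt h, Nat.add_zero]
      push_cast; ring
    · rw [if_neg h]
      have hdiv : (n₀ + t₀) / b = 1 := by
        apply Nat.div_eq_of_lt_le <;> omega
      rw [hdiv]
      push_cast; ring
  rw [Finset.sum_congr rfl hcase, Finset.sum_ite]
  have hf1 : Finset.filter (fun n₀ => n₀ + t₀ < b) (Finset.range b) = Finset.range (b - t₀) := by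
    ext n₀; simp only [Finset.mem_filter, Finset.mem_range]; omega
  have hf2 : (Finset.filter (fun n₀ => ¬ n₀ + t₀ < b) (Finset.range b)).card = t₀ := by
    have h6 : Finset.filter (fun n₀ => ¬ n₀ + t₀ < b) (Finset.range b)
        = Finset.Ico (b - t₀) b := by
      ext n₀; simp only [Finset.mem_filter, Finset.mem_range, Finset.mem_Ico]; omega
    rw [h6, Nat.card_Ico]; omega
  rw [hf1, Finset.sum_const, Finset.sum_const, hf2, Finset.card_range]
  have hc : ((b - t₀ : ℕ) : ℤ) = (b:ℤ) - t₀ := by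
    have : t₀ ≤ b := le_of_lt ht₀lt
    push_cast [this]
    ring
  simp only [nsmul_eq_mul, hc]
  push_cast
  ring

lemma Acyc_zero (b t : ℕ) : Acyc b 0 t = 0 := by
  simp [Acyc, Nat.mod_one, digitSum]


def VW (b : ℕ) : List ℕ → ℤ × ℤ
  | [] => (0, 0)
  | d :: L =>
      ((b:ℤ)^(L.length+1) * (d * ((b:ℤ) - d)) + ((b:ℤ) - d) * (VW b L).1 + d * (VW b L).2,
       if d = b - 1 then b * (VW b L).2
       else (b:ℤ)^(L.length+1) * ((d+1) * ((b:ℤ) - 1 - d)) + ((b:ℤ) - 1 - d) * (VW b L).1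
          + ((d:ℤ)+1) * (VW b L).2)

lemma VW_nil (b : ℕ) : VW b [] = (0, 0) := rfl

lemma VW_cons_fst (b d : ℕ) (L : List ℕ) :
    (VW b (d :: L)).1 = (b:ℤ)^(L.length+1) * (d * ((b:ℤ) - d))
      + ((b:ℤ) - d) * (VW b L).1 + d * (VW b L).2 := by
  rw [VW]

lemma VW_cons_snd (b d : ℕ) (L : List ℕ) :
    (VW b (d :: L)).2 = if d = b - 1 then b * (VW b L).2
      else (b:ℤ)^(L.length+1) * ((d+1) * ((b:ℤ) - 1 - d)) + ((b:ℤ) - 1 - d) * (VW b L).1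
          + ((d:ℤ)+1) * (VW b L).2 := by
  rw [VW]

def cHead (b : ℕ) : List ℕ → ℤ
  | [] => 0
  | d :: _ => if d = 0 then (b:ℤ)^2 - b else if d = b - 1 then -b else 0

lemma cHead_cons (b d : ℕ) (L : List ℕ) :
    cHead b (d :: L) = if d = 0 then (b:ℤ)^2 - b else if d = b - 1 then -b else 0 := rfl

lemma nz_nil (b : ℕ) : nzBlockCount b [] = 0 := rfl
lemma nz_singleton (b d : ℕ) : nzBlockCount b [d] = if d = 0 then 0 else 1 := rfl
lemma nz_cons_cons (b d e : ℕ) (l : List ℕ) : nzBlockCount b (d :: e :: l)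
    = (if d = e ∧ (d = 0 ∨ d = b - 1) then 0 else if d = 0 then 0 else 1)
      + nzBlockCount b (e :: l) := rfl

lemma cHead_le {b : ℕ} (hb : 2 ≤ b) (M : List ℕ) : cHead b M ≤ (b:ℤ)^2 - b := by
  have hbZ : (2:ℤ) ≤ (b:ℤ) := by exact_mod_cast hb
  rcases M with _ | ⟨e, l⟩
  · simp only [cHead]; nlinarith
  · rw [cHead_cons]
    split_ifs <;> nlinarith

set_option maxHeartbeats 1000000 in
lemma invariant {b : ℕ} (hb : 2 ≤ b) : ∀ (L : List ℕ), (∀ d ∈ L, d < b) →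
    (VW b L).1 ≤ (b:ℤ)^2 * (nzBlockCount b L : ℤ) * (b:ℤ)^L.length ∧
    (VW b L).2 ≤ ((b:ℤ)^2 * (nzBlockCount b L : ℤ) + cHead b L) * (b:ℤ)^L.length := by
  have hbZ : (2:ℤ) ≤ (b:ℤ) := by exact_mod_cast hb
  intro L
  induction L with
  | nil =>
    intro _
    rw [VW_nil]
    simp [cHead, show nzBlockCount b [] = 0 from rfl]
  | cons d M ih =>
    intro hd
    have hdb : d < b := hd d List.mem_cons_self
    obtain ⟨hX, hY⟩ := ih (fun x hx => hd x (List.mem_cons_of_mem d hx))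
    have hB1 : (1:ℤ) ≤ (b:ℤ)^M.length := one_le_pow₀ (by linarith)
    have hB0 : (0:ℤ) ≤ (b:ℤ)^M.length := by linarith
    have hlamM : (0:ℤ) ≤ (nzBlockCount b M : ℤ) := Int.natCast_nonneg _
    have hcle : cHead b M ≤ (b:ℤ)^2 - b := cHead_le hb M
    have hdZ : (0:ℤ) ≤ (d:ℤ) := Int.natCast_nonneg _
    have hdbZ : (d:ℤ) < (b:ℤ) := by exact_mod_cast hdb
    have hcube : (0:ℤ) ≤ (b:ℤ)^3 - 3*(b:ℤ)^2 + 2*b := by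
      nlinarith [mul_nonneg (mul_nonneg (by linarith : (0:ℤ) ≤ (b:ℤ))
        (by linarith : (0:ℤ) ≤ (b:ℤ) - 1)) (by linarith : (0:ℤ) ≤ (b:ℤ) - 2)]
    rcases eq_or_ne d 0 with h0 | h0
    · -- d = 0
      subst h0
      have hn0 : ¬ (0:ℕ) = b - 1 := by omega
      have hlamL : ((nzBlockCount b (0 :: M) : ℕ) : ℤ) = (nzBlockCount b M : ℤ) := by
        rcases M with _ | ⟨e, l⟩
        · rw [nz_singleton]; simp [nz_nil]
        · rw [nz_cons_cons]; simp
      constructor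
      · rw [VW_cons_fst, List.length_cons, hlamL, pow_succ]
        push_cast
        nlinarith [mul_le_mul_of_nonneg_left hX (by linarith : (0:ℤ) ≤ (b:ℤ))]
      · rw [VW_cons_snd, if_neg hn0, cHead_cons, if_pos rfl, List.length_cons, hlamL, pow_succ]
        push_cast
        nlinarith [mul_le_mul_of_nonneg_left hX (by linarith : (0:ℤ) ≤ (b:ℤ) - 1), hY,
          mul_le_mul_of_nonneg_left hcle hB0, mul_nonneg hB0 hcube]
    · rcases eq_or_ne d (b-1) with h1 | h1
      · -- d = b - 1
        have hdZ' : (d:ℤ) = (b:ℤ) - 1 := by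
          have h2 : (d:ℕ) + 1 = b := by omega
          have := congrArg (Nat.cast : ℕ → ℤ) h2
          push_cast at this; linarith
        have hn0 : ¬ d = 0 := h0
        rcases M with _ | ⟨e, l⟩
        · have hlamL : ((nzBlockCount b [d] : ℕ) : ℤ) = 1 := by
            rw [nz_singleton, if_neg hn0]; simp
          constructor
          · rw [VW_cons_fst, List.length_cons, hlamL, List.length_nil]
            simp only [VW_nil]
            rw [hdZ']
            norm_num
            nlinarith [mul_nonneg (mul_nonneg (by linarith : (0:ℤ) ≤ (b:ℤ))
              (by linarith : (0:ℤ) ≤ (b:ℤ))) (by linarith : (0:ℤ) ≤ (b:ℤ) - 1)]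
          · rw [VW_cons_snd, if_pos h1, cHead_cons, if_neg hn0, if_pos h1,
              List.length_cons, hlamL, List.length_nil]
            simp only [VW_nil]
            norm_num
            nlinarith [mul_nonneg (by nlinarith : (0:ℤ) ≤ (b:ℤ)^2 - b)
              (by linarith : (0:ℤ) ≤ (b:ℤ))]
        · simp only [List.length_cons] at hX hY hB0 hB1
          rcases eq_or_ne e (b-1) with he | he
          · have hlamL : ((nzBlockCount b (d :: e :: l) : ℕ) : ℤ)
                = (nzBlockCount b (e :: l) : ℤ) := by
              rw [nz_cons_cons, if_pos (show d = e ∧ (d = 0 ∨ d = b - 1) by omega)]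
              push_cast; ring
            have hcM : cHead b (e :: l) = -(b:ℤ) := by
              rw [cHead_cons, if_neg (show ¬ e = 0 by omega), if_pos he]
            rw [hcM] at hY
            constructor
            · rw [VW_cons_fst, hlamL]
              simp only [List.length_cons]
              rw [pow_succ, hdZ']
              nlinarith [hX, mul_le_mul_of_nonneg_left hY (by linarith : (0:ℤ) ≤ (b:ℤ) - 1)]
            · rw [VW_cons_snd, if_pos h1, cHead_cons, if_neg hn0, if_pos h1, hlamL]
              simp only [List.length_cons]
              rw [pow_succ (b:ℤ) (l.length+1)]
              nlinarith [mul_le_mul_of_nonneg_left hY (by linarith : (0:ℤ) ≤ (b:ℤ))]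
          · have hlamL : ((nzBlockCount b (d :: e :: l) : ℕ) : ℤ)
                = (nzBlockCount b (e :: l) : ℤ) + 1 := by
              rw [nz_cons_cons, if_neg (show ¬ (d = e ∧ (d = 0 ∨ d = b - 1)) by omega),
                if_neg hn0]
              push_cast; ring
            constructor
            · rw [VW_cons_fst, hlamL]
              simp only [List.length_cons]
              rw [pow_succ, hdZ']
              push_cast
              nlinarith [hX, mul_le_mul_of_nonneg_left hY (by linarith : (0:ℤ) ≤ (b:ℤ) - 1),
                mul_le_mul_of_nonneg_left hcle
                  (mul_nonneg (by linarith : (0:ℤ) ≤ (b:ℤ) - 1) hB0),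
                mul_nonneg hB0 (by positivity : (0:ℤ) ≤ (b:ℤ)^2)]
            · rw [VW_cons_snd, if_pos h1, cHead_cons, if_neg hn0, if_pos h1, hlamL]
              simp only [List.length_cons]
              rw [pow_succ (b:ℤ) (l.length+1)]
              push_cast
              nlinarith [mul_le_mul_of_nonneg_left hY (by linarith : (0:ℤ) ≤ (b:ℤ)),
                mul_le_mul_of_nonneg_left hcle
                  (mul_nonneg (by linarith : (0:ℤ) ≤ (b:ℤ)) hB0)]
      · -- middle digit
        have hd1 : 1 ≤ d := by omega
        have hd2Z : (d:ℤ) ≤ (b:ℤ) - 2 := by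
          have h2 : (d:ℕ) + 2 ≤ b := by omega
          have := (Nat.cast_le (α := ℤ)).2 h2
          push_cast at this; linarith
        have hd1Z : (1:ℤ) ≤ (d:ℤ) := by exact_mod_cast hd1
        have hn0 : ¬ d = 0 := h0
        have hlamL : ((nzBlockCount b (d :: M) : ℕ) : ℤ) = (nzBlockCount b M : ℤ) + 1 := by
          rcases M with _ | ⟨e, l⟩
          · rw [nz_singleton, if_neg hn0]; simp [nz_nil]
          · rw [nz_cons_cons, if_neg (show ¬ (d = e ∧ (d = 0 ∨ d = b - 1)) by omega),
              if_neg hn0]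
            push_cast; ring
        constructor
        · rw [VW_cons_fst, List.length_cons, hlamL, pow_succ]
          push_cast
          nlinarith [mul_le_mul_of_nonneg_left hX (by linarith : (0:ℤ) ≤ (b:ℤ) - d),
            mul_le_mul_of_nonneg_left hY hdZ,
            mul_le_mul_of_nonneg_left hcle (mul_nonneg hdZ hB0),
            mul_nonneg hB0 (by nlinarith [sq_nonneg ((d:ℤ) - b)] :
              (0:ℤ) ≤ (b:ℤ) * ((b:ℤ)^2 - (d:ℤ)*(2*(b:ℤ)-1-(d:ℤ))))]
        · rw [VW_cons_snd, if_neg h1, cHead_cons, if_neg hn0, if_neg h1,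
            List.length_cons, hlamL, pow_succ]
          push_cast
          nlinarith [mul_le_mul_of_nonneg_left hX (by linarith : (0:ℤ) ≤ (b:ℤ) - 1 - d),
            mul_le_mul_of_nonneg_left hY (by linarith : (0:ℤ) ≤ (d:ℤ) + 1),
            mul_le_mul_of_nonneg_left hcle (mul_nonneg (by linarith : (0:ℤ) ≤ (d:ℤ) + 1) hB0),
            mul_nonneg hB0 (by nlinarith [sq_nonneg ((d:ℤ) + 1 - b)] :
              (0:ℤ) ≤ (b:ℤ) * ((b:ℤ)^2 - ((d:ℤ)+1)*(2*(b:ℤ)-2-(d:ℤ))))]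

lemma VW_spec {b : ℕ} (hb : 2 ≤ b) : ∀ (L : List ℕ), (∀ d ∈ L, d < b) →
    Acyc b L.length (Nat.ofDigits b L) = (VW b L).1 ∧
    Acyc b L.length (Nat.ofDigits b L + 1) = (VW b L).2 := by
  intro L
  induction L with
  | nil => intro _; simp [VW, Acyc_zero b _]
  | cons d L ih =>
    intro hd
    have hdb : d < b := hd d List.mem_cons_self
    obtain ⟨ih1, ih2⟩ := ih (fun x hx => hd x (List.mem_cons_of_mem d hx))
    have hof : Nat.ofDigits b (d :: L) = d + b * Nat.ofDigits b L :=
      Nat.ofDigits_cons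
    constructor
    · have hmod : (d + b * Nat.ofDigits b L) % b = d := by
        rw [Nat.add_mul_mod_self_left, Nat.mod_eq_of_lt hdb]
      have hdivv : (d + b * Nat.ofDigits b L) / b = Nat.ofDigits b L := by
        rw [Nat.add_mul_div_left _ _ (by omega : 0 < b), Nat.div_eq_of_lt hdb, Nat.zero_add]
      rw [List.length_cons, hof, Acyc_rec hb, hmod, hdivv, ih1, ih2]
      simp only [VW]
      push_cast
      ring
    · rw [List.length_cons, hof]
      by_cases hcase : d = b - 1
      · have hx : b * (Nat.ofDigits b L + 1) = b * Nat.ofDigits b L + b := by ring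
        have h1 : d + b * Nat.ofDigits b L + 1 = 0 + b * (Nat.ofDigits b L + 1) := by
          omega
        have hmod : (0 + b * (Nat.ofDigits b L + 1)) % b = 0 := by
          rw [Nat.add_mul_mod_self_left]; simp
        have hdivv : (0 + b * (Nat.ofDigits b L + 1)) / b = Nat.ofDigits b L + 1 := by
          rw [Nat.add_mul_div_left _ _ (by omega : 0 < b)]; simp
        rw [h1, Acyc_rec hb, hmod, hdivv, ih2]
        simp only [VW, if_pos hcase, Nat.cast_zero]
        push_cast
        ring
      · have hdb' : d + 1 < b := by omega
        have h1 : d + b * Nat.ofDigits b L + 1 = (d+1) + b * Nat.ofDigits b L := by omega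
        have hmod : ((d+1) + b * Nat.ofDigits b L) % b = d + 1 := by
          rw [Nat.add_mul_mod_self_left, Nat.mod_eq_of_lt hdb']
        have hdivv : ((d+1) + b * Nat.ofDigits b L) / b = Nat.ofDigits b L := by
          rw [Nat.add_mul_div_left _ _ (by omega : 0 < b), Nat.div_eq_of_lt hdb', Nat.zero_add]
        rw [h1, Acyc_rec hb, hmod, hdivv, ih1, ih2]
        simp only [VW, if_neg hcase]
        have hc : ((b:ℤ) - (d+1)) = (b:ℤ) - 1 - d := by ring
        push_cast
        ring

lemma nz_replicate (b : ℕ) : ∀ k, nzBlockCount b (List.replicate k 0) = 0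
  | 0 => rfl
  | 1 => by rw [show List.replicate 1 (0:ℕ) = [0] from rfl, nz_singleton]; simp
  | (k+2) => by
      rw [show List.replicate (k+2) (0:ℕ) = 0 :: 0 :: List.replicate k 0 from rfl,
        nz_cons_cons, if_pos ⟨rfl, Or.inl rfl⟩,
        show (0:ℕ) :: List.replicate k 0 = List.replicate (k+1) 0 from rfl,
        nz_replicate b (k+1)]

lemma nz_append_zeros (b k : ℕ) : ∀ L, nzBlockCount b (L ++ List.replicate k 0) = nzBlockCount b L := by
  intro L
  induction L with
  | nil => simpa [nz_nil] using nz_replicate b k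
  | cons d M ihM =>
    cases M with
    | nil =>
      cases k with
      | zero => simp
      | succ k' =>
        rw [show [d] ++ List.replicate (k'+1) 0 = d :: 0 :: List.replicate k' 0 from rfl,
          nz_cons_cons,
          show (0:ℕ) :: List.replicate k' 0 = List.replicate (k'+1) 0 from rfl,
          nz_replicate, nz_singleton]
        rcases eq_or_ne d 0 with h | h
        · subst h; simp
        · rw [if_neg (fun hc => h hc.1), if_neg h]
    | cons e l =>
      rw [show (d :: e :: l) ++ List.replicate k 0 = d :: e :: (l ++ List.replicate k 0) from rfl,
        nz_cons_cons, nz_cons_cons,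
        show e :: (l ++ List.replicate k 0) = (e :: l) ++ List.replicate k 0 from rfl, ihM]

lemma ofDigits_replicate_zero (b : ℕ) : ∀ k, Nat.ofDigits b (List.replicate k 0) = 0
  | 0 => rfl
  | (k+1) => by
      rw [show List.replicate (k+1) (0:ℕ) = 0 :: List.replicate k 0 from rfl,
        Nat.ofDigits_cons, ofDigits_replicate_zero b k]
      simp

lemma Acyc_le {b : ℕ} (hb : 2 ≤ b) (r m : ℕ) (hm : (Nat.digits b r).length ≤ m) :
    Acyc b m r ≤ (b:ℤ)^2 * (lamb b r : ℤ) * (b:ℤ)^m := by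
  set L := Nat.digits b r with hL
  set P := L ++ List.replicate (m - L.length) 0 with hP
  have hlen : P.length = m := by
    rw [hP, List.length_append, List.length_replicate]
    omega
  have hmem : ∀ d ∈ P, d < b := by
    intro d hdmem
    rcases List.mem_append.1 hdmem with h | h
    · exact Nat.digits_lt_base (by omega) h
    · rw [List.eq_of_mem_replicate h]; omega
  have hval : Nat.ofDigits b P = r := by
    rw [hP, Nat.ofDigits_append, ofDigits_replicate_zero, Nat.ofDigits_digits]
    simp
  have h1 := (VW_spec hb P hmem).1
  have h2 := (invariant hb P hmem).1
  rw [hlen, hval] at h1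
  rw [hlen] at h2
  have h3 : nzBlockCount b P = lamb b r := by
    rw [hP, nz_append_zeros, hL]
    rfl
  rw [h1, ← h3]
  exact h2

lemma sumsq_delta_le {b : ℕ} (hb : 2 ≤ b) (r m : ℕ) (hm : (Nat.digits b r).length ≤ m) :
    ∑ n ∈ Finset.range (b^m), (delta b r n)^2
      ≤ (b:ℤ)^2 * (lamb b r : ℤ) * (b:ℤ)^m + r * (2*r+1) := by
  have hrlt : r < b ^ m := by
    calc r < b ^ (Nat.digits b r).length := Nat.lt_base_pow_length_digits (by omega)
    _ ≤ b ^ m := Nat.pow_le_pow_right (by omega) hm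
  have hsle : ∀ x : ℕ, digitSum b x ≤ x := fun x => Nat.digit_sum_le b x
  have hptwise : ∀ n ∈ Finset.range (b^m), (delta b r n)^2
      ≤ ((digitSum b ((n + r) % b ^ m) : ℤ) - digitSum b n) ^ 2
        + (if b^m ≤ n + r then (2*(r:ℤ)+1) else 0) := by
    intro n hn
    have hnlt : n < b^m := Finset.mem_range.1 hn
    by_cases hc : b^m ≤ n + r
    · rw [if_pos hc]
      have hx : n + r = b^m + (n + r - b^m) := by omega
      have hxlt : n + r - b^m < b^m := by omega
      have hs : digitSum b (n + r) = 1 + digitSum b (n + r - b^m) := by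
        conv_lhs => rw [hx]
        exact digitSum_pow_add hb m _ hxlt
      have hmod : (n + r) % b^m = n + r - b^m := by
        conv_lhs => rw [hx]
        rw [Nat.add_mod_left]
        exact Nat.mod_eq_of_lt hxlt
      have hDle : (digitSum b (n + r - b^m) : ℤ) ≤ (r:ℤ) - 1 := by
        have h4 : digitSum b (n + r - b^m) ≤ n + r - b^m := hsle _
        have h5 : n + r - b^m ≤ r - 1 := by omega
        have h6 : (1:ℕ) ≤ r := by omega
        have := le_trans h4 h5
        calc (digitSum b (n + r - b^m) : ℤ) ≤ ((r - 1 : ℕ) : ℤ) := by exact_mod_cast this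
        _ = (r:ℤ) - 1 := by push_cast [h6]; ring
      have hD0 : (0:ℤ) ≤ (digitSum b n : ℤ) := Int.natCast_nonneg _
      rw [delta, hs, hmod]
      push_cast
      nlinarith [hDle, hD0]
    · rw [if_neg hc, delta, Nat.mod_eq_of_lt (by omega : n + r < b^m)]
      simp
  calc ∑ n ∈ Finset.range (b^m), (delta b r n)^2
      ≤ ∑ n ∈ Finset.range (b^m), (((digitSum b ((n + r) % b ^ m) : ℤ) - digitSum b n) ^ 2
        + (if b^m ≤ n + r then (2*(r:ℤ)+1) else 0)) := Finset.sum_le_sum hptwise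
    _ = Acyc b m r + ∑ n ∈ Finset.range (b^m), (if b^m ≤ n + r then (2*(r:ℤ)+1) else 0) := by
        rw [Finset.sum_add_distrib, Acyc]
    _ ≤ (b:ℤ)^2 * (lamb b r : ℤ) * (b:ℤ)^m + r * (2*r+1) := by
        have hcard : ∑ n ∈ Finset.range (b^m), (if b^m ≤ n + r then (2*(r:ℤ)+1) else 0)
            = ((Finset.filter (fun n => b^m ≤ n + r) (Finset.range (b^m))).card : ℤ) * (2*(r:ℤ)+1) := by
          rw [Finset.sum_ite, Finset.sum_const, Finset.sum_const]
          simp only [nsmul_eq_mul, smul_zero, add_zero, mul_zero]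
        have hfcard : (Finset.filter (fun n => b^m ≤ n + r) (Finset.range (b^m))).card = r := by
          have : Finset.filter (fun n => b^m ≤ n + r) (Finset.range (b^m))
              = Finset.Ico (b^m - r) (b^m) := by
            ext n; simp only [Finset.mem_filter, Finset.mem_range, Finset.mem_Ico]; omega
          rw [this, Nat.card_Ico]; omega
        rw [hcard, hfcard]
        have := Acyc_le hb r m hm
        nlinarith [this]


/-- **Proposition (upper bound).** For every integer `r ≥ 1`, `Var(μ^(r)) ≤ b²·λ(r)`,
where `λ(r)` is the number of non-zero blocks in the base-`b` expansion of `r`. -/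
theorem variance_upper_bound (b : ℕ) (hb : 2 ≤ b)
    (μ : ℕ → ℤ → ℝ)
    (hμ : ∀ (r : ℕ) (d : ℤ),
      Tendsto (fun N : ℕ =>
        (((Finset.range N).filter fun n => delta b r n = d).card : ℝ) / N)
        atTop (𝓝 (μ r d)))
    (V : ℕ → ℝ)
    (hV : ∀ r : ℕ, HasSum (fun d : ℤ => (d : ℝ) ^ 2 * μ r d) (V r))
    (r : ℕ) (hr : 1 ≤ r) :
    V r ≤ (b : ℝ) ^ 2 * lamb b r := by
  classical
  set T : ℝ := (b:ℝ)^2 * (lamb b r : ℝ) with hT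
  set C : ℝ := (r:ℝ) * (2*r+1) with hC
  have hfin : ∀ S : Finset ℤ, ∑ d ∈ S, (d:ℝ)^2 * μ r d ≤ T := by
    intro S
    have hpow : Tendsto (fun m : ℕ => b ^ m) atTop atTop :=
      tendsto_pow_atTop_atTop_of_one_lt (by omega)
    -- limit of partial density sums along N = b^m
    have h1 : Tendsto (fun m : ℕ => ∑ d ∈ S, (d:ℝ)^2 *
        ((((Finset.range (b^m)).filter fun n => delta b r n = d).card : ℝ) / ((b^m : ℕ) : ℝ)))
        atTop (𝓝 (∑ d ∈ S, (d:ℝ)^2 * μ r d)) := by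
      apply tendsto_finset_sum
      intro d _
      exact (((hμ r d).comp hpow).const_mul _)
    -- eventual bound
    have h2 : ∀ m : ℕ, (Nat.digits b r).length ≤ m → (∑ d ∈ S, (d:ℝ)^2 *
        ((((Finset.range (b^m)).filter fun n => delta b r n = d).card : ℝ) / ((b^m : ℕ) : ℝ)))
        ≤ T + C / ((b^m : ℕ) : ℝ) := by
      intro m hm
      have hNpos : (0:ℝ) < ((b^m : ℕ) : ℝ) := by positivity
      -- step A
      have stepA : ∑ d ∈ S, (d:ℝ)^2 *
          ((((Finset.range (b^m)).filter fun n => delta b r n = d).card : ℝ))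
          ≤ ∑ n ∈ Finset.range (b^m), ((delta b r n : ℤ) : ℝ)^2 := by
        have hterm : ∀ d ∈ S, (d:ℝ)^2 *
            ((((Finset.range (b^m)).filter fun n => delta b r n = d).card : ℝ))
            = ∑ n ∈ (Finset.range (b^m)).filter (fun n => delta b r n = d),
                ((delta b r n : ℤ) : ℝ)^2 := by
          intro d _
          rw [Finset.sum_congr rfl (fun n hn => by
            rw [(Finset.mem_filter.1 hn).2]), Finset.sum_const, nsmul_eq_mul, mul_comm]
        rw [Finset.sum_congr rfl hterm]
        set s := (Finset.range (b^m)).filter (fun n => delta b r n ∈ S) with hs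
        have hmaps : ∀ n ∈ s, delta b r n ∈ S := fun n hn => (Finset.mem_filter.1 hn).2
        have hfib := Finset.sum_fiberwise_of_maps_to hmaps (fun n => ((delta b r n : ℤ) : ℝ)^2)
        have hfe : ∀ d ∈ S, s.filter (fun n => delta b r n = d)
            = (Finset.range (b^m)).filter (fun n => delta b r n = d) := by
          intro d hd
          ext n
          simp only [hs, Finset.mem_filter, Finset.mem_range]
          constructor
          · rintro ⟨⟨h1', _⟩, h3⟩; exact ⟨h1', h3⟩
          · rintro ⟨h1', h3⟩; exact ⟨⟨h1', h3 ▸ hd⟩, h3⟩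
        have hswap : ∑ d ∈ S, ∑ n ∈ (Finset.range (b^m)).filter (fun n => delta b r n = d),
            ((delta b r n : ℤ) : ℝ)^2 = ∑ n ∈ s, ((delta b r n : ℤ) : ℝ)^2 := by
          rw [← hfib]
          exact Finset.sum_congr rfl (fun d hd => by rw [hfe d hd])
        rw [hswap]
        exact Finset.sum_le_sum_of_subset_of_nonneg (Finset.filter_subset _ _)
          (fun n _ _ => by positivity)
      -- step B : integer bound, cast
      have stepB : ∑ n ∈ Finset.range (b^m), ((delta b r n : ℤ) : ℝ)^2
          ≤ T * ((b^m : ℕ) : ℝ) + C := by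
        have h3 := sumsq_delta_le hb r m hm
        have h4 : ((∑ n ∈ Finset.range (b^m), (delta b r n)^2 : ℤ) : ℝ)
            ≤ (((b:ℤ)^2 * (lamb b r : ℤ) * (b:ℤ)^m + r * (2*r+1) : ℤ) : ℝ) := by
          exact_mod_cast h3
        push_cast at h4
        push_cast [hT, hC]
        nlinarith [h4]
      -- combine
      have hdiv : ∑ d ∈ S, (d:ℝ)^2 *
          ((((Finset.range (b^m)).filter fun n => delta b r n = d).card : ℝ) / ((b^m : ℕ) : ℝ))
          = (∑ d ∈ S, (d:ℝ)^2 *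
            ((((Finset.range (b^m)).filter fun n => delta b r n = d).card : ℝ))) / ((b^m : ℕ) : ℝ) := by
        rw [Finset.sum_div]
        exact Finset.sum_congr rfl (fun d _ => by ring)
      rw [hdiv]
      rw [div_le_iff₀ hNpos]
      calc (∑ d ∈ S, (d:ℝ)^2 *
            ((((Finset.range (b^m)).filter fun n => delta b r n = d).card : ℝ)))
          ≤ T * ((b^m : ℕ) : ℝ) + C := le_trans stepA stepB
        _ = (T + C / ((b^m : ℕ) : ℝ)) * ((b^m : ℕ) : ℝ) := by
            field_simp
    -- limit of the bound
    have h3 : Tendsto (fun m : ℕ => T + C / ((b^m : ℕ) : ℝ)) atTop (𝓝 (T + 0)) := by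
      apply Tendsto.const_add
      apply Tendsto.div_atTop tendsto_const_nhds
      exact tendsto_natCast_atTop_atTop.comp hpow
    rw [add_zero] at h3
    refine le_of_tendsto_of_tendsto h1 h3 ?_
    filter_upwards [eventually_ge_atTop (Nat.digits b r).length] with m hm
    exact h2 m hm
  exact hasSum_le_of_sum_le (hV r) hfin
end
end

section
/- For every integer r ≥ 1, Var(μ^(r)) ≥ (b/4)·λ(r). -/
open Filter Topology MeasureTheory

noncomputable section

namespace VLB

open Finset

/-! ### Discrete lemmas about `lamb` -/

lemma bmod (b q c : ℕ) (hb : 2 ≤ b) (hc : c < b) : (b * q + c) % b = c := by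
  rw [Nat.mul_add_mod, Nat.mod_eq_of_lt hc]

lemma bdiv (b q c : ℕ) (hb : 2 ≤ b) (hc : c < b) : (b * q + c) / b = q := by
  rw [Nat.mul_add_div (by omega), Nat.div_eq_of_lt hc, Nat.add_zero]

lemma nz_cons_le (b a : ℕ) (L : List ℕ) :
    nzBlockCount b (a :: L) ≤ 1 + nzBlockCount b L := by
  cases L with
  | nil => simp only [nzBlockCount]; split <;> omega
  | cons e l => simp only [nzBlockCount]; split_ifs <;> omega

lemma nz_le_cons (b a : ℕ) (L : List ℕ) :
    nzBlockCount b L ≤ nzBlockCount b (a :: L) := by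
  cases L with
  | nil => simp [nzBlockCount]
  | cons e l => simp only [nzBlockCount]; omega

lemma digits_cons (b r : ℕ) (hb : 2 ≤ b) (hr : 1 ≤ r) :
    Nat.digits b r = r % b :: Nat.digits b (r / b) :=
  Nat.digits_def' (by omega) (by omega)

lemma digits_cons' (b q c : ℕ) (hb : 2 ≤ b) (hc : c < b) (h : 1 ≤ b * q + c) :
    Nat.digits b (b * q + c) = c :: Nat.digits b q := by
  rw [digits_cons b _ hb h, bmod b q c hb hc, bdiv b q c hb hc]

lemma lamb_mul (b q : ℕ) (hb : 2 ≤ b) (hq : 1 ≤ q) : lamb b (b * q) = lamb b q := by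
  have h1 : 1 ≤ b * q + 0 := by have : 0 < b * q := Nat.mul_pos (by omega) hq; omega
  have hd : Nat.digits b (b * q) = 0 :: Nat.digits b q := by
    have := digits_cons' b q 0 hb (by omega) h1
    simpa using this
  rw [lamb, hd, lamb, digits_cons b q hb hq]
  simp only [nzBlockCount]
  split_ifs <;> omega

lemma lamb_le_div (b r : ℕ) (hb : 2 ≤ b) (hr : 1 ≤ r) :
    lamb b r ≤ lamb b (r / b) + 1 := by
  rw [lamb, digits_cons b r hb hr, lamb]
  have := nz_cons_le b (r % b) (Nat.digits b (r / b))
  omega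

lemma lamb_succ_ge (b : ℕ) (hb : 2 ≤ b) : ∀ q, lamb b q ≤ lamb b (q + 1) + 2 := by
  intro q
  induction q using Nat.strong_induction_on with
  | _ q ih =>
    rcases Nat.eq_zero_or_pos q with h0 | h0
    · subst h0; simp [lamb, nzBlockCount]
    set a := q % b with ha
    set q' := q / b with hq'
    have hqeq : b * q' + a = q := Nat.div_add_mod q b
    have hab : a < b := Nat.mod_lt _ (by omega)
    have hdq : Nat.digits b q = a :: Nat.digits b q' := digits_cons b q hb h0
    rcases Nat.lt_or_ge a (b - 1) with hlt | hge
    · have hd1 : Nat.digits b (q + 1) = (a + 1) :: Nat.digits b q' := by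
        have : b * q' + (a + 1) = q + 1 := by omega
        rw [← this]; exact digits_cons' b q' (a + 1) hb (by omega) (by omega)
      have e1 : lamb b q ≤ 1 + nzBlockCount b (Nat.digits b q') := by
        rw [lamb, hdq]; exact nz_cons_le _ _ _
      have e2 : nzBlockCount b (Nat.digits b q') ≤ lamb b (q + 1) := by
        rw [lamb, hd1]; exact nz_le_cons _ _ _
      omega
    · have haeq : a = b - 1 := by omega
      have hmul : b * (q' + 1) = b * q' + b := by ring
      have h2 : q + 1 = b * (q' + 1) := by omega
      have hl1 : lamb b (q + 1) = lamb b (q' + 1) := by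
        rw [h2]; exact lamb_mul b (q' + 1) hb (Nat.le_add_left 1 q')
      rcases Nat.eq_zero_or_pos q' with hq0 | hq0
      · have : lamb b q = 1 := by
          rw [lamb, hdq, hq0]
          simp only [Nat.digits_zero, nzBlockCount]
          rw [if_neg (by omega)]
        omega
      · have hdq' : Nat.digits b q' = q' % b :: Nat.digits b (q' / b) := digits_cons b q' hb hq0
        set e := q' % b with he
        have heb : e < b := Nat.mod_lt _ (by omega)
        rcases eq_or_ne e (b - 1) with hee | hee
        · have hlq : lamb b q = lamb b q' := by
            rw [lamb, hdq, hdq', lamb, hdq']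
            simp only [nzBlockCount]
            rw [if_pos ⟨by omega, Or.inr haeq⟩]
            omega
          have := ih q' (Nat.div_lt_self h0 (by omega))
          omega
        · have hq'eq : b * (q' / b) + e = q' := Nat.div_add_mod q' b
          have hd1 : Nat.digits b (q' + 1) = (e + 1) :: Nat.digits b (q' / b) := by
            have : b * (q' / b) + (e + 1) = q' + 1 := by omega
            rw [← this]; exact digits_cons' b _ _ hb (by omega) (by omega)
          have e0 : lamb b q ≤ 1 + nzBlockCount b (Nat.digits b q') := by
            rw [lamb, hdq]; exact nz_cons_le _ _ _
          have e1 : nzBlockCount b (Nat.digits b q')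
              ≤ 1 + nzBlockCount b (Nat.digits b (q' / b)) := by
            rw [hdq']; exact nz_cons_le _ _ _
          have e2 : nzBlockCount b (Nat.digits b (q' / b)) ≤ lamb b (q' + 1) := by
            rw [lamb, hd1]; exact nz_le_cons _ _ _
          omega

lemma lamb_zero (b : ℕ) : lamb b 0 = 0 := by simp [lamb, nzBlockCount]

lemma lamb_one (b : ℕ) (hb : 2 ≤ b) : lamb b 1 = 1 := by
  have h : Nat.digits b 1 = 1 :: Nat.digits b 0 := by
    have h0 : b * 0 + 1 = 1 := by omega
    rw [← h0]; exact digits_cons' b 0 1 hb (by omega) (by omega)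
  rw [lamb, h]
  simp [nzBlockCount]

/-! ### Counting lemmas for `delta` -/

lemma digitSum_rec (b : ℕ) (hb : 2 ≤ b) (n : ℕ) :
    digitSum b n = n % b + digitSum b (n / b) := by
  rcases Nat.eq_zero_or_pos n with h | h
  · subst h; simp [digitSum]
  · rw [digitSum, Nat.digits_def' (by omega : 1 < b) h]
    simp [digitSum]

lemma digitSum_split (b : ℕ) (hb : 2 ≤ b) (m c : ℕ) (hc : c < b) :
    digitSum b (b * m + c) = c + digitSum b m := by
  rw [digitSum_rec b hb (b * m + c), Nat.mul_add_mod, Nat.mod_eq_of_lt hc,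
    Nat.mul_add_div (by omega), Nat.div_eq_of_lt hc, Nat.add_zero]

lemma delta_split (b : ℕ) (hb : 2 ≤ b) (q a n' c : ℕ) (ha : a < b) (hc : c < b) :
    delta b (b * q + a) (b * n' + c)
      = if c + a < b then (a : ℤ) + delta b q n'
        else (a : ℤ) - b + delta b (q + 1) n' := by
  have h1 : digitSum b (b * n' + c) = c + digitSum b n' := digitSum_split b hb n' c hc
  split_ifs with h
  · have h2 : b * n' + c + (b * q + a) = b * (n' + q) + (c + a) := by ring
    rw [delta, h2, digitSum_split b hb (n' + q) (c + a) h, h1, delta]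
    push_cast
    ring
  · have h2 : b * n' + c + (b * q + a) = b * (n' + (q + 1)) + (c + a - b) := by
      have e : b * (n' + (q + 1)) = b * n' + b * q + b := by ring
      omega
    rw [delta, h2, digitSum_split b hb (n' + (q + 1)) (c + a - b) (by omega), h1, delta]
    have hca : ((c + a - b : ℕ) : ℤ) = (c : ℤ) + a - b := by omega
    push_cast [hca]
    ring

lemma sum_range_mul (b : ℕ) {M : Type*} [AddCommMonoid M] (N : ℕ) (f : ℕ → M) :
    ∑ n ∈ range (b * N), f n = ∑ i ∈ range N, ∑ j ∈ range b, f (b * i + j) := by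
  induction N with
  | zero => simp
  | succ N ih =>
    have h : b * (N + 1) = b * N + b := by ring
    rw [Finset.sum_range_succ, ← ih, h, Finset.sum_range_add]

lemma count_split (b : ℕ) (hb : 2 ≤ b) (q a : ℕ) (ha : a < b) (d : ℤ) (N : ℕ) :
    ((range (b * N)).filter (fun n => delta b (b * q + a) n = d)).card
      = (b - a) * ((range N).filter (fun n => delta b q n = d - a)).card
        + a * ((range N).filter (fun n => delta b (q + 1) n = d - a + b)).card := by
  rw [Finset.card_filter, sum_range_mul]
  have step : ∀ i, ∑ j ∈ range b, (if delta b (b * q + a) (b * i + j) = d then 1 else 0)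
      = (b - a) * (if delta b q i = d - a then 1 else 0)
        + a * (if delta b (q + 1) i = d - a + b then 1 else 0) := by
    intro i
    have hcong : ∀ j ∈ range b,
        (if delta b (b * q + a) (b * i + j) = d then (1 : ℕ) else 0)
          = (if j + a < b then (if delta b q i = d - a then 1 else 0)
              else (if delta b (q + 1) i = d - a + b then 1 else 0)) := by
      intro j hj
      rw [Finset.mem_range] at hj
      rw [delta_split b hb q a i j ha hj]
      split_ifs with h h1 h2 h2 h3 h4 <;> first | rfl | (exfalso; omega)
    rw [Finset.sum_congr rfl hcong, Finset.sum_ite]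
    have e1 : (range b).filter (fun j => j + a < b) = range (b - a) := by
      ext j; simp [Finset.mem_filter, Finset.mem_range]; omega
    have e2 : ((range b).filter (fun j => ¬ (j + a < b))).card = a := by
      have : (range b).filter (fun j => ¬ (j + a < b)) = Finset.Ico (b - a) b := by
        ext j; simp [Finset.mem_filter, Finset.mem_range]; omega
      rw [this, Nat.card_Ico]; omega
    rw [Finset.sum_const, Finset.sum_const, e1, e2, Finset.card_range]
    simp [mul_comm]
  rw [Finset.sum_congr rfl (fun i _ => step i), Finset.sum_add_distrib, ← Finset.mul_sum,
    ← Finset.mul_sum, ← Finset.card_filter, ← Finset.card_filter]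

/-! ### From densities to the convolution identity -/

lemma mu_nonneg (b : ℕ) (μ : ℕ → ℤ → ℝ)
    (hμ : ∀ (r : ℕ) (d : ℤ),
      Tendsto (fun N : ℕ =>
        (((Finset.range N).filter fun n => delta b r n = d).card : ℝ) / N)
        atTop (𝓝 (μ r d)))
    (r : ℕ) (d : ℤ) : 0 ≤ μ r d := by
  refine ge_of_tendsto (hμ r d) (Eventually.of_forall fun N => ?_)
  positivity

lemma mu_conv (b : ℕ) (hb : 2 ≤ b) (μ : ℕ → ℤ → ℝ)
    (hμ : ∀ (r : ℕ) (d : ℤ),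
      Tendsto (fun N : ℕ =>
        (((Finset.range N).filter fun n => delta b r n = d).card : ℝ) / N)
        atTop (𝓝 (μ r d)))
    (q a : ℕ) (ha : a < b) (d : ℤ) :
    μ (b * q + a) d = ((b : ℝ) - a) / b * μ q (d - a) + (a : ℝ) / b * μ (q + 1) (d - a + b) := by
  have hb0 : (0 : ℝ) < b := by positivity
  have htend : Tendsto (fun N : ℕ =>
      (((range (b * N)).filter fun n => delta b (b * q + a) n = d).card : ℝ) / (b * N))
      atTop (𝓝 (μ (b * q + a) d)) := by
    have hcomp : Tendsto (fun N : ℕ => b * N) atTop atTop :=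
      tendsto_atTop_mono (fun N => Nat.le_mul_of_pos_left N (by omega)) tendsto_id
    have h2 := (hμ (b * q + a) d).comp hcomp
    have h3 : ((fun N : ℕ =>
        (((range N).filter fun n => delta b (b * q + a) n = d).card : ℝ) / N) ∘ fun N => b * N)
        = fun N : ℕ =>
        (((range (b * N)).filter fun n => delta b (b * q + a) n = d).card : ℝ) / (b * N) := by
      funext N; simp [Function.comp]
    rwa [h3] at h2
  have heq : ∀ N : ℕ,
      (((range (b * N)).filter fun n => delta b (b * q + a) n = d).card : ℝ) / (b * N)
        = ((b : ℝ) - a) / b * ((((range N).filter fun n => delta b q n = d - a).card : ℝ) / N)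
          + (a : ℝ) / b
            * ((((range N).filter fun n => delta b (q + 1) n = d - a + b).card : ℝ) / N) := by
    intro N
    rcases Nat.eq_zero_or_pos N with h | h
    · subst h; simp
    · rw [count_split b hb q a ha d N]
      have hN : (0 : ℝ) < N := by positivity
      have hba : ((b - a : ℕ) : ℝ) = (b : ℝ) - a := by
        push_cast [Nat.cast_sub (le_of_lt ha)]; ring
      push_cast [hba]
      field_simp
      try ring
  have htend2 : Tendsto (fun N : ℕ =>
      (((range (b * N)).filter fun n => delta b (b * q + a) n = d).card : ℝ) / (b * N))
      atTop (𝓝 (((b : ℝ) - a) / b * μ q (d - a) + (a : ℝ) / b * μ (q + 1) (d - a + b))) := by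
    simp only [heq]
    exact (((hμ q (d - a)).const_mul _).add ((hμ (q + 1) (d - a + b)).const_mul _))
  exact tendsto_nhds_unique htend htend2

lemma mu_zero (b : ℕ) (μ : ℕ → ℤ → ℝ)
    (hμ : ∀ (r : ℕ) (d : ℤ),
      Tendsto (fun N : ℕ =>
        (((Finset.range N).filter fun n => delta b r n = d).card : ℝ) / N)
        atTop (𝓝 (μ r d)))
    (d : ℤ) : μ 0 d = if d = 0 then 1 else 0 := by
  have hdelta : ∀ n, delta b 0 n = 0 := by intro n; simp [delta]
  split_ifs with h
  · subst h
    refine tendsto_nhds_unique (hμ 0 0) ?_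
    have key : ∀ N : ℕ, 1 ≤ N →
        (((range N).filter fun n => delta b 0 n = (0 : ℤ)).card : ℝ) / N = 1 := by
      intro N hN
      have : (range N).filter (fun n => delta b 0 n = (0 : ℤ)) = range N := by
        apply Finset.filter_true_of_mem; intro n _; exact hdelta n
      rw [this, Finset.card_range]
      field_simp
    refine Tendsto.congr' ?_ tendsto_const_nhds
    filter_upwards [eventually_ge_atTop 1] with N hN
    exact (key N hN).symm
  · refine tendsto_nhds_unique (hμ 0 d) ?_
    have key : ∀ N : ℕ, (((range N).filter fun n => delta b 0 n = d).card : ℝ) / N = 0 := by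
      intro N
      have : (range N).filter (fun n => delta b 0 n = d) = ∅ := by
        apply Finset.filter_false_of_mem; intro n _; rw [hdelta n]; omega
      simp [this]
    simpa [key] using tendsto_const_nhds.congr (fun N => (key N).symm)

/-! ### tsum machinery -/

lemma tsum_sub_shift (f : ℤ → ℝ) (t : ℤ) : ∑' d : ℤ, f (d - t) = ∑' d : ℤ, f d := by
  simpa using (Equiv.subRight t).tsum_eq f

lemma summable_sub_shift {f : ℤ → ℝ} (hf : Summable f) (t : ℤ) :
    Summable (fun d : ℤ => f (d - t)) :=
  (Equiv.summable_iff (Equiv.subRight t)).2 hf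

lemma rec_tsum (g₁ g₂ : ℤ → ℝ) (h₁ : Summable g₁) (h₂ : Summable g₂) (c₁ c₂ : ℝ) (t₁ t₂ : ℤ) :
    ∑' d : ℤ, (c₁ * g₁ (d - t₁) + c₂ * g₂ (d - t₂))
      = c₁ * ∑' d : ℤ, g₁ d + c₂ * ∑' d : ℤ, g₂ d := by
  rw [Summable.tsum_add ((summable_sub_shift h₁ t₁).mul_left c₁) ((summable_sub_shift h₂ t₂).mul_left c₂),
    tsum_mul_left, tsum_mul_left, tsum_sub_shift, tsum_sub_shift]

lemma summable_mu (μ : ℕ → ℤ → ℝ) (hnn : ∀ r d, 0 ≤ μ r d)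
    (hsq : ∀ r : ℕ, Summable (fun d : ℤ => (d : ℝ) ^ 2 * μ r d)) (r : ℕ) :
    Summable (μ r) := by
  rw [← Finset.summable_compl_iff ({0} : Finset ℤ)]
  refine Summable.of_nonneg_of_le (fun x => hnn r x) (fun x => ?_) ((hsq r).subtype _)
  show μ r x ≤ ((x : ℤ) : ℝ) ^ 2 * μ r x
  have hx : (x : ℤ) ≠ 0 := by have := x.2; simpa using this
  have h1 : (1 : ℝ) ≤ ((x : ℤ) : ℝ) ^ 2 := by
    have h2 : (1 : ℤ) ≤ |(x : ℤ)| := Int.one_le_abs hx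
    have h3 : (1 : ℤ) ≤ (x : ℤ) ^ 2 := by nlinarith [sq_abs (x : ℤ)]
    exact_mod_cast h3
  nlinarith [hnn r (x : ℤ)]

lemma summable_lin (μ : ℕ → ℤ → ℝ) (hnn : ∀ r d, 0 ≤ μ r d)
    (hsq : ∀ r : ℕ, Summable (fun d : ℤ => (d : ℝ) ^ 2 * μ r d)) (r : ℕ) :
    Summable (fun d : ℤ => (d : ℝ) * μ r d) := by
  apply Summable.of_abs
  rw [← Finset.summable_compl_iff ({0} : Finset ℤ)]
  refine Summable.of_nonneg_of_le (fun x => abs_nonneg _) (fun x => ?_) ((hsq r).subtype _)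
  show |((x : ℤ) : ℝ) * μ r x| ≤ ((x : ℤ) : ℝ) ^ 2 * μ r x
  have hx : (1 : ℤ) ≤ |(x : ℤ)| := by
    refine Int.one_le_abs ?_
    have := x.2; simpa using this
  have h1 : (1 : ℝ) ≤ |((x : ℤ) : ℝ)| := by
    rw [← Int.cast_abs]; exact_mod_cast hx
  rw [abs_mul, abs_of_nonneg (hnn r _)]
  calc |((x : ℤ) : ℝ)| * μ r x ≤ (|((x : ℤ) : ℝ)| * |((x : ℤ) : ℝ)|) * μ r x :=
        mul_le_mul_of_nonneg_right (le_mul_of_one_le_left (abs_nonneg _) h1) (hnn r _)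
    _ = ((x : ℤ) : ℝ) ^ 2 * μ r x := by rw [← abs_mul, ← sq, abs_sq]

lemma summable_shift_sq (μ : ℕ → ℤ → ℝ) (hnn : ∀ r d, 0 ≤ μ r d)
    (hsq : ∀ r : ℕ, Summable (fun d : ℤ => (d : ℝ) ^ 2 * μ r d)) (r : ℕ) (t : ℤ) :
    Summable (fun e : ℤ => ((e + t : ℤ) : ℝ) ^ 2 * μ r e) := by
  apply Summable.congr (f := fun e : ℤ =>
    (e : ℝ) ^ 2 * μ r e + (2 * (t : ℝ)) * ((e : ℝ) * μ r e) + (t : ℝ) ^ 2 * μ r e)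
  · exact ((hsq r).add ((summable_lin μ hnn hsq r).mul_left _)).add
      ((summable_mu μ hnn hsq r).mul_left _)
  · intro e; push_cast; ring

lemma summable_shift_lin (μ : ℕ → ℤ → ℝ) (hnn : ∀ r d, 0 ≤ μ r d)
    (hsq : ∀ r : ℕ, Summable (fun d : ℤ => (d : ℝ) ^ 2 * μ r d)) (r : ℕ) (t : ℤ) :
    Summable (fun e : ℤ => ((e + t : ℤ) : ℝ) * μ r e) := by
  apply Summable.congr (f := fun e : ℤ => (e : ℝ) * μ r e + (t : ℝ) * μ r e)
  · exact (summable_lin μ hnn hsq r).add ((summable_mu μ hnn hsq r).mul_left _)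
  · intro e; push_cast; ring

lemma tsum_shift_sq (μ : ℕ → ℤ → ℝ) (V : ℕ → ℝ) (hnn : ∀ r d, 0 ≤ μ r d)
    (hV : ∀ r : ℕ, HasSum (fun d : ℤ => (d : ℝ) ^ 2 * μ r d) (V r)) (r : ℕ) (t : ℤ) :
    ∑' d : ℤ, ((d + t : ℤ) : ℝ) ^ 2 * μ r d
      = V r + 2 * (t : ℝ) * ∑' d : ℤ, (d : ℝ) * μ r d + (t : ℝ) ^ 2 * ∑' d : ℤ, μ r d := by
  have hsq : ∀ r : ℕ, Summable (fun d : ℤ => (d : ℝ) ^ 2 * μ r d) := fun r => (hV r).summable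
  have h1 : ∀ d : ℤ, ((d + t : ℤ) : ℝ) ^ 2 * μ r d
      = (d : ℝ) ^ 2 * μ r d + ((2 * (t : ℝ)) * ((d : ℝ) * μ r d) + (t : ℝ) ^ 2 * μ r d) := by
    intro d; push_cast; ring
  rw [tsum_congr h1,
    Summable.tsum_add (hsq r) (((summable_lin μ hnn hsq r).mul_left _).add
      ((summable_mu μ hnn hsq r).mul_left _)),
    Summable.tsum_add ((summable_lin μ hnn hsq r).mul_left _) ((summable_mu μ hnn hsq r).mul_left _),
    tsum_mul_left, tsum_mul_left, (hV r).tsum_eq]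
  ring

lemma tsum_shift_lin (μ : ℕ → ℤ → ℝ) (hnn : ∀ r d, 0 ≤ μ r d)
    (hsq : ∀ r : ℕ, Summable (fun d : ℤ => (d : ℝ) ^ 2 * μ r d)) (r : ℕ) (t : ℤ) :
    ∑' d : ℤ, ((d + t : ℤ) : ℝ) * μ r d
      = (∑' d : ℤ, (d : ℝ) * μ r d) + (t : ℝ) * ∑' d : ℤ, μ r d := by
  have h1 : ∀ d : ℤ, ((d + t : ℤ) : ℝ) * μ r d
      = (d : ℝ) * μ r d + (t : ℝ) * μ r d := by
    intro d; push_cast; ring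
  rw [tsum_congr h1,
    Summable.tsum_add (summable_lin μ hnn hsq r) ((summable_mu μ hnn hsq r).mul_left _), tsum_mul_left]

section recs

variable {b : ℕ} (hb : 2 ≤ b) (μ : ℕ → ℤ → ℝ) (V : ℕ → ℝ)

lemma rec_m (hnn : ∀ r d, 0 ≤ μ r d)
    (hconv : ∀ (q a : ℕ), a < b → ∀ d : ℤ,
      μ (b * q + a) d = ((b : ℝ) - a) / b * μ q (d - a) + (a : ℝ) / b * μ (q + 1) (d - a + b))
    (hsq : ∀ r : ℕ, Summable (fun d : ℤ => (d : ℝ) ^ 2 * μ r d))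
    (q a : ℕ) (ha : a < b) :
    ∑' d : ℤ, μ (b * q + a) d
      = ((b : ℝ) - a) / b * ∑' d : ℤ, μ q d + (a : ℝ) / b * ∑' d : ℤ, μ (q + 1) d := by
  have h : ∀ d : ℤ, μ (b * q + a) d
      = ((b : ℝ) - a) / b * μ q (d - (a : ℤ)) + (a : ℝ) / b * μ (q + 1) (d - ((a : ℤ) - b)) := by
    intro d
    rw [hconv q a ha d]
    have e2 : d - ((a : ℤ) - b) = d - a + b := by omega
    rw [e2]
  rw [tsum_congr h]
  exact rec_tsum _ _ (summable_mu μ hnn hsq q) (summable_mu μ hnn hsq (q + 1)) _ _ _ _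

lemma rec_s (hnn : ∀ r d, 0 ≤ μ r d)
    (hconv : ∀ (q a : ℕ), a < b → ∀ d : ℤ,
      μ (b * q + a) d = ((b : ℝ) - a) / b * μ q (d - a) + (a : ℝ) / b * μ (q + 1) (d - a + b))
    (hsq : ∀ r : ℕ, Summable (fun d : ℤ => (d : ℝ) ^ 2 * μ r d))
    (q a : ℕ) (ha : a < b) :
    ∑' d : ℤ, (d : ℝ) * μ (b * q + a) d
      = ((b : ℝ) - a) / b * ((∑' d : ℤ, (d : ℝ) * μ q d) + (a : ℝ) * ∑' d : ℤ, μ q d)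
        + (a : ℝ) / b * ((∑' d : ℤ, (d : ℝ) * μ (q + 1) d)
            + ((a : ℝ) - b) * ∑' d : ℤ, μ (q + 1) d) := by
  have h : ∀ d : ℤ, (d : ℝ) * μ (b * q + a) d
      = ((b : ℝ) - a) / b * ((fun e : ℤ => ((e + (a : ℤ) : ℤ) : ℝ) * μ q e) (d - (a : ℤ)))
        + (a : ℝ) / b * ((fun e : ℤ => ((e + ((a : ℤ) - b) : ℤ) : ℝ) * μ (q + 1) e)
            (d - ((a : ℤ) - b))) := by
    intro d
    rw [hconv q a ha d]
    have e1 : d - (a : ℤ) + a = d := by omega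
    have e2 : d - ((a : ℤ) - b) = d - a + b := by omega
    have e3 : d - ((a : ℤ) - b) + ((a : ℤ) - b) = d := by omega
    simp only [e1, e2, e3]
    ring
  rw [tsum_congr h, rec_tsum _ _ (summable_shift_lin μ hnn hsq q _)
    (summable_shift_lin μ hnn hsq (q + 1) _) _ _ _ _,
    tsum_shift_lin μ hnn hsq q, tsum_shift_lin μ hnn hsq (q + 1)]
  push_cast
  ring

lemma rec_v (hnn : ∀ r d, 0 ≤ μ r d)
    (hconv : ∀ (q a : ℕ), a < b → ∀ d : ℤ,
      μ (b * q + a) d = ((b : ℝ) - a) / b * μ q (d - a) + (a : ℝ) / b * μ (q + 1) (d - a + b))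
    (hV : ∀ r : ℕ, HasSum (fun d : ℤ => (d : ℝ) ^ 2 * μ r d) (V r))
    (q a : ℕ) (ha : a < b) :
    V (b * q + a)
      = ((b : ℝ) - a) / b * (V q + 2 * (a : ℝ) * (∑' d : ℤ, (d : ℝ) * μ q d)
            + (a : ℝ) ^ 2 * ∑' d : ℤ, μ q d)
        + (a : ℝ) / b * (V (q + 1) + 2 * ((a : ℝ) - b) * (∑' d : ℤ, (d : ℝ) * μ (q + 1) d)
            + ((a : ℝ) - b) ^ 2 * ∑' d : ℤ, μ (q + 1) d) := by
  have hsq : ∀ r : ℕ, Summable (fun d : ℤ => (d : ℝ) ^ 2 * μ r d) := fun r => (hV r).summable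
  have h : ∀ d : ℤ, (d : ℝ) ^ 2 * μ (b * q + a) d
      = ((b : ℝ) - a) / b * ((fun e : ℤ => ((e + (a : ℤ) : ℤ) : ℝ) ^ 2 * μ q e) (d - (a : ℤ)))
        + (a : ℝ) / b * ((fun e : ℤ => ((e + ((a : ℤ) - b) : ℤ) : ℝ) ^ 2 * μ (q + 1) e)
            (d - ((a : ℤ) - b))) := by
    intro d
    rw [hconv q a ha d]
    have e1 : d - (a : ℤ) + a = d := by omega
    have e2 : d - ((a : ℤ) - b) = d - a + b := by omega
    have e3 : d - ((a : ℤ) - b) + ((a : ℤ) - b) = d := by omega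
    simp only [e1, e2, e3]
    ring
  have key := tsum_congr (L := SummationFilter.unconditional ℤ) h
  rw [rec_tsum _ _ (summable_shift_sq μ hnn hsq q _)
    (summable_shift_sq μ hnn hsq (q + 1) _) _ _ _ _,
    tsum_shift_sq μ V hnn hV q, tsum_shift_sq μ V hnn hV (q + 1),
    (hV (b * q + a)).tsum_eq] at key
  push_cast at key
  rw [key]

end recs

end VLB

/-- **Proposition (lower bound).** For every integer `r ≥ 1`, `Var(μ^(r)) ≥ (b/4)·λ(r)`,
where `λ(r)` is the number of non-zero blocks in the base-`b` expansion of `r`. -/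
theorem variance_lower_bound (b : ℕ) (hb : 2 ≤ b)
    (μ : ℕ → ℤ → ℝ)
    (hμ : ∀ (r : ℕ) (d : ℤ),
      Tendsto (fun N : ℕ =>
        (((Finset.range N).filter fun n => delta b r n = d).card : ℝ) / N)
        atTop (𝓝 (μ r d)))
    (V : ℕ → ℝ)
    (hV : ∀ r : ℕ, HasSum (fun d : ℤ => (d : ℝ) ^ 2 * μ r d) (V r))
    (r : ℕ) (hr : 1 ≤ r) :
    (b : ℝ) / 4 * lamb b r ≤ V r := by
  have hB : (0 : ℝ) < b := by positivity
  have h2 : (2 : ℝ) ≤ b := by exact_mod_cast hb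
  have hnn : ∀ r d, 0 ≤ μ r d := VLB.mu_nonneg b μ hμ
  have hconv := VLB.mu_conv b hb μ hμ
  have hμ0 := VLB.mu_zero b μ hμ
  have hsq : ∀ r : ℕ, Summable (fun d : ℤ => (d : ℝ) ^ 2 * μ r d) := fun r => (hV r).summable
  have recm := VLB.rec_m μ hnn hconv hsq
  have recs := VLB.rec_s μ hnn hconv hsq
  have recv := VLB.rec_v μ V hnn hconv hV
  -- values at 0
  have mtot0 : ∑' d : ℤ, μ 0 d = 1 := by
    rw [tsum_congr hμ0]; exact tsum_ite_eq (0 : ℤ) (fun _ => (1 : ℝ))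
  have s0 : ∑' d : ℤ, (d : ℝ) * μ 0 d = 0 := by
    have h : ∀ d : ℤ, (d : ℝ) * μ 0 d = 0 := by
      intro d; rw [hμ0 d]; split_ifs with h
      · subst h; simp
      · simp
    rw [tsum_congr h, tsum_zero]
  have v0 : V 0 = 0 := by
    have h : ∀ d : ℤ, (d : ℝ) ^ 2 * μ 0 d = 0 := by
      intro d; rw [hμ0 d]; split_ifs with h
      · subst h; simp
      · simp
    rw [← (hV 0).tsum_eq, tsum_congr h, tsum_zero]
  -- total mass is 1
  have mtot_all : ∀ r : ℕ, ∑' d : ℤ, μ r d = 1 := by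
    intro r
    induction r using Nat.strong_induction_on with
    | _ r ih =>
      match r, ih with
      | 0, _ => exact mtot0
      | 1, _ =>
        have h := recm 0 1 (by omega)
        simp only [Nat.mul_zero, Nat.zero_add] at h
        rw [mtot0] at h
        have hssolve : ∑' d : ℤ, μ 1 d = 1 := by
          field_simp at h
          push_cast at h ⊢
          nlinarith [h]
        exact hssolve
      | (n + 2), ih =>
        set r := n + 2 with hrdef
        set a := r % b with ha
        set q := r / b with hq
        have hqeq : b * q + a = r := Nat.div_add_mod r b
        have hab : a < b := Nat.mod_lt _ (by omega)
        have hrec := recm q a hab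
        rw [hqeq] at hrec
        have hqlt : q < r := Nat.div_lt_self (by omega) (by omega)
        rcases Nat.eq_zero_or_pos a with h0 | h0
        · rw [ih q hqlt] at hrec
          rw [hrec, h0]
          push_cast
          field_simp
          ring
        · have hq1lt : q + 1 < r := by
            rcases Nat.eq_zero_or_pos q with h | h
            · rw [h, Nat.mul_zero] at hqeq; omega
            · have h3 : 2 * q ≤ b * q := Nat.mul_le_mul_right q hb
              omega
          rw [ih q hqlt, ih (q + 1) hq1lt] at hrec
          rw [hrec]
          field_simp
          ring
  -- mean is 0
  have s_all : ∀ r : ℕ, ∑' d : ℤ, (d : ℝ) * μ r d = 0 := by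
    intro r
    induction r using Nat.strong_induction_on with
    | _ r ih =>
      match r, ih with
      | 0, _ => exact s0
      | 1, _ =>
        have h := recs 0 1 (by omega)
        simp only [Nat.mul_zero, Nat.zero_add] at h
        rw [mtot0, s0, mtot_all 1] at h
        push_cast at h
        have hbne : (b : ℝ) ≠ 0 := ne_of_gt hB
        field_simp at h
        have h5 : (∑' d : ℤ, (d : ℝ) * μ 1 d) * ((b : ℝ) - 1) = 0 := by linear_combination h
        rcases mul_eq_zero.1 h5 with h6 | h6
        · exact h6
        · exfalso; linarith
      | (n + 2), ih =>
        set r := n + 2 with hrdef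
        set a := r % b with ha
        set q := r / b with hq
        have hqeq : b * q + a = r := Nat.div_add_mod r b
        have hab : a < b := Nat.mod_lt _ (by omega)
        have hrec := recs q a hab
        rw [hqeq] at hrec
        have hqlt : q < r := Nat.div_lt_self (by omega) (by omega)
        rw [ih q hqlt, mtot_all q] at hrec
        rcases Nat.eq_zero_or_pos a with h0 | h0
        · rw [hrec, h0]
          push_cast
          simp
        · have hq1lt : q + 1 < r := by
            rcases Nat.eq_zero_or_pos q with h | h
            · rw [h, Nat.mul_zero] at hqeq; omega
            · have h3 : 2 * q ≤ b * q := Nat.mul_le_mul_right q hb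
              omega
          rw [ih (q + 1) hq1lt, mtot_all (q + 1)] at hrec
          rw [hrec]
          field_simp
          ring
  -- clean variance recursion
  have recv' : ∀ q a : ℕ, a < b →
      V (b * q + a) = ((b : ℝ) - a) / b * (V q + (a : ℝ) ^ 2)
        + (a : ℝ) / b * (V (q + 1) + ((a : ℝ) - b) ^ 2) := by
    intro q a hq
    have h := recv q a hq
    rw [mtot_all q, mtot_all (q + 1), s_all q, s_all (q + 1)] at h
    rw [h]; ring
  -- value at 1
  have v1 : V 1 = b := by
    have h := recv' 0 1 (by omega)
    simp only [Nat.mul_zero, Nat.zero_add] at h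
    rw [v0] at h
    push_cast at h
    field_simp at h
    have h5 : (V 1 - (b : ℝ)) * ((b : ℝ) - 1) = 0 := by linear_combination h
    rcases mul_eq_zero.1 h5 with h6 | h6
    · linarith
    · exfalso; linarith
  -- final induction
  have final : ∀ r : ℕ, (b : ℝ) / 4 * lamb b r ≤ V r := by
    intro r
    induction r using Nat.strong_induction_on with
    | _ r ih =>
      match r, ih with
      | 0, _ => rw [VLB.lamb_zero b, v0]; simp
      | 1, _ =>
        rw [VLB.lamb_one b hb, v1]
        push_cast
        linarith
      | (n + 2), ih =>
        set r := n + 2 with hrdef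
        set a := r % b with ha
        set q := r / b with hq
        have hqeq : b * q + a = r := Nat.div_add_mod r b
        have hab : a < b := Nat.mod_lt _ (by omega)
        have hrec := recv' q a hab
        rw [hqeq] at hrec
        have hqlt : q < r := Nat.div_lt_self (by omega) (by omega)
        rcases Nat.eq_zero_or_pos a with h0 | h0
        · have hq1 : 1 ≤ q := by
            rcases Nat.eq_zero_or_pos q with h | h
            · rw [h, Nat.mul_zero] at hqeq; omega
            · exact h
          have hlr : lamb b r = lamb b q := by
            rw [← hqeq, h0, Nat.add_zero]; exact VLB.lamb_mul b q hb hq1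
          rw [h0] at hrec
          push_cast at hrec
          have hVr : V r = V q := by rw [hrec]; field_simp; ring
          rw [hVr, hlr]
          exact ih q hqlt
        · have hq1lt : q + 1 < r := by
            rcases Nat.eq_zero_or_pos q with h | h
            · rw [h, Nat.mul_zero] at hqeq; omega
            · have h3 : 2 * q ≤ b * q := Nat.mul_le_mul_right q hb
              omega
          have hVq := ih q hqlt
          have hVq1 := ih (q + 1) hq1lt
          have hL1 : lamb b q ≤ lamb b (q + 1) + 2 := VLB.lamb_succ_ge b hb q
          have hLr : lamb b r ≤ lamb b q + 1 := VLB.lamb_le_div b r hb (by omega)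
          have hA1 : (1 : ℝ) ≤ (a : ℝ) := by exact_mod_cast h0
          have hAB : (a : ℝ) ≤ (b : ℝ) - 1 := by
            have : (a : ℝ) + 1 ≤ (b : ℝ) := by exact_mod_cast hab
            linarith
          have hLrR : (lamb b r : ℝ) ≤ (lamb b q : ℝ) + 1 := by exact_mod_cast hLr
          have hL1R : (lamb b q : ℝ) ≤ (lamb b (q + 1) : ℝ) + 2 := by exact_mod_cast hL1
          have hLq0 : (0 : ℝ) ≤ (lamb b q : ℝ) := by positivity
          have hLq10 : (0 : ℝ) ≤ (lamb b (q + 1) : ℝ) := by positivity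
          have hBrec : (b : ℝ) * V r
              = ((b : ℝ) - a) * (V q + (a : ℝ) ^ 2) + (a : ℝ) * (V (q + 1) + ((a : ℝ) - b) ^ 2) := by
            rw [hrec]
            field_simp
          rw [div_mul_eq_mul_div, div_le_iff₀ (by norm_num : (0 : ℝ) < 4)]
          have key : (b : ℝ) * ((b : ℝ) * (lamb b r : ℝ)) ≤ (b : ℝ) * (V r * 4) := by
            have hswap : (b : ℝ) * (V r * 4) = 4 * ((b : ℝ) * V r) := by ring
            rw [hswap, hBrec]
            have k1 : ((b : ℝ) - a) * ((b : ℝ) / 4 * (lamb b q : ℝ)) ≤ ((b : ℝ) - a) * V q :=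
              mul_le_mul_of_nonneg_left hVq (by linarith)
            have k2 : (a : ℝ) * ((b : ℝ) / 4 * (lamb b (q + 1) : ℝ)) ≤ (a : ℝ) * V (q + 1) :=
              mul_le_mul_of_nonneg_left hVq1 (by linarith)
            nlinarith [mul_nonneg (mul_nonneg (sub_nonneg.2 hA1)
                (by linarith : (0 : ℝ) ≤ (b : ℝ) - 1 - a)) hB.le,
              mul_le_mul_of_nonneg_left hL1R (by positivity : (0 : ℝ) ≤ (a : ℝ) * b / 4),
              mul_le_mul_of_nonneg_left hLrR
                (by positivity : (0 : ℝ) ≤ (b : ℝ) * b / 4)]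
          have := le_of_mul_le_mul_left key hB
          linarith
  exact final r
end
end

section
/- Let γ be the standard Gaussian measure N(0,1) on ℝ, let ε > 0, and for each t ∈ ℝ let h_t : ℝ → [0,1] be a measurable function with h_t(u) = 1 for all u ≤ t − ε and h_t(u) = 0 for all u ≥ t + ε. Then for every Borel probability measure ν on ℝ: sup_{t∈ℝ} |ν((−∞,t]) − γ((−∞,t])| ≤ sup_{t∈ℝ} |∫_ℝ h_t dν − ∫_ℝ h_t dγ| + 4ε/√(2π). -/
open MeasureTheory ProbabilityTheory

lemma smoothing_aux_integrable (g : ℝ → ℝ) (hm : Measurable g)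
    (hr : ∀ u, g u ∈ Set.Icc (0 : ℝ) 1) (μ : Measure ℝ) [IsProbabilityMeasure μ] :
    Integrable g μ :=
  (integrable_const 1).mono' hm.aestronglyMeasurable
    (Filter.Eventually.of_forall fun u => by
      rw [Real.norm_eq_abs, abs_of_nonneg (hr u).1]; exact (hr u).2)

lemma smoothing_gauss_inc (a b : ℝ) (hab : a ≤ b) :
    ((gaussianReal 0 1) (Set.Iic b)).toReal - ((gaussianReal 0 1) (Set.Iic a)).toReal ≤
      (b - a) / Real.sqrt (2 * Real.pi) := by
  have hsplit : (gaussianReal 0 1) (Set.Iic b)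
      = (gaussianReal 0 1) (Set.Iic a) + (gaussianReal 0 1) (Set.Ioc a b) := by
    rw [← measure_union (Set.Iic_disjoint_Ioc le_rfl) measurableSet_Ioc,
      Set.Iic_union_Ioc_eq_Iic hab]
  have hfin : ∀ s : Set ℝ, (gaussianReal 0 1) s ≠ ⊤ := fun s => measure_ne_top _ _
  have hv : (1 : NNReal) ≠ 0 := one_ne_zero
  have hπ : 0 < Real.sqrt (2 * Real.pi) := Real.sqrt_pos.mpr (by positivity)
  have hpdf : ∀ x : ℝ, gaussianPDFReal 0 1 x ≤ (Real.sqrt (2 * Real.pi))⁻¹ := by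
    intro x
    rw [gaussianPDFReal]
    simp only [NNReal.coe_one, mul_one, sub_zero, one_div]
    have hexp : Real.exp (-x ^ 2 / 2) ≤ 1 := by
      rw [Real.exp_le_one_iff]
      nlinarith [sq_nonneg x]
    have h0' : (0 : ℝ) ≤ (Real.sqrt (2 * Real.pi))⁻¹ := by positivity
    calc (Real.sqrt (2 * Real.pi))⁻¹ * Real.exp (-x ^ 2 / 2)
        ≤ (Real.sqrt (2 * Real.pi))⁻¹ * 1 := mul_le_mul_of_nonneg_left hexp h0'
      _ = (Real.sqrt (2 * Real.pi))⁻¹ := mul_one _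
  have hioc : ((gaussianReal 0 1) (Set.Ioc a b)).toReal ≤ (b - a) / Real.sqrt (2 * Real.pi) := by
    rw [gaussianReal_apply_eq_integral _ hv, ENNReal.toReal_ofReal
      (integral_nonneg fun x => gaussianPDFReal_nonneg _ _ _)]
    calc ∫ x in Set.Ioc a b, gaussianPDFReal 0 1 x
        ≤ ∫ _x in Set.Ioc a b, (Real.sqrt (2 * Real.pi))⁻¹ := by
          apply setIntegral_mono_on ((integrable_gaussianPDFReal 0 1).restrict)
            (integrableOn_const measure_Ioc_lt_top.ne) measurableSet_Ioc
          exact fun x _ => hpdf x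
      _ = (b - a) / Real.sqrt (2 * Real.pi) := by
          rw [setIntegral_const, Measure.real, Real.volume_Ioc, ENNReal.toReal_ofReal_eq_iff.mpr]
          · rw [smul_eq_mul, div_eq_mul_inv]
          · linarith
  rw [hsplit, ENNReal.toReal_add (hfin _) (hfin _)]
  linarith

/-- **Lemma (smoothing of indicator functions).** Let `γ = N(0,1)` be the standard Gaussian
measure on `ℝ`, let `ε > 0`, and for each `t ∈ ℝ` let `h t : ℝ → [0,1]` be a measurable
function with `h t u = 1` for `u ≤ t - ε` and `h t u = 0` for `u ≥ t + ε`. Then for every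
Borel probability measure `ν` on `ℝ`:
`sup_t |ν((-∞,t]) - γ((-∞,t])| ≤ sup_t |∫ h t dν - ∫ h t dγ| + 4ε/√(2π)`. -/
theorem smoothing_indicator (ε : ℝ) (hε : 0 < ε)
    (h : ℝ → ℝ → ℝ)
    (hmeas : ∀ t, Measurable (h t))
    (hrange : ∀ t u, h t u ∈ Set.Icc (0 : ℝ) 1)
    (h1 : ∀ t u, u ≤ t - ε → h t u = 1)
    (h0 : ∀ t u, t + ε ≤ u → h t u = 0)
    (ν : Measure ℝ) [IsProbabilityMeasure ν] (t : ℝ) :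
    |(ν (Set.Iic t)).toReal - ((gaussianReal 0 1) (Set.Iic t)).toReal| ≤
      (⨆ t' : ℝ, |(∫ u, h t' u ∂ν) - ∫ u, h t' u ∂(gaussianReal 0 1)|) +
        4 * ε / Real.sqrt (2 * Real.pi) := by
  set γ := gaussianReal 0 1 with hγ
  have hint : ∀ (μ : Measure ℝ) [IsProbabilityMeasure μ] (t' : ℝ), Integrable (h t') μ :=
    fun μ _ t' => smoothing_aux_integrable (h t') (hmeas t') (hrange t') μ
  -- measure of Iic (t'-ε) ≤ integral of h t'
  have meas_le_int : ∀ (μ : Measure ℝ) [IsProbabilityMeasure μ] (t' : ℝ),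
      (μ (Set.Iic (t' - ε))).toReal ≤ ∫ u, h t' u ∂μ := by
    intro μ _ t'
    have : (μ (Set.Iic (t' - ε))).toReal
        = ∫ u, (Set.Iic (t' - ε)).indicator (fun _ => (1 : ℝ)) u ∂μ := by
      rw [integral_indicator_const _ measurableSet_Iic, smul_eq_mul, mul_one, Measure.real]
    rw [this]
    apply integral_mono ((integrable_const 1).indicator measurableSet_Iic) (hint μ t')
    intro u
    by_cases hu : u ≤ t' - ε
    · rw [Set.indicator_of_mem (Set.mem_Iic.mpr hu), h1 t' u hu]
    · rw [Set.indicator_of_notMem (by simpa using hu)]; exact (hrange t' u).1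
  -- integral of h t' ≤ measure of Iic (t'+ε)
  have int_le_meas : ∀ (μ : Measure ℝ) [IsProbabilityMeasure μ] (t' : ℝ),
      ∫ u, h t' u ∂μ ≤ (μ (Set.Iic (t' + ε))).toReal := by
    intro μ _ t'
    have : (μ (Set.Iic (t' + ε))).toReal
        = ∫ u, (Set.Iic (t' + ε)).indicator (fun _ => (1 : ℝ)) u ∂μ := by
      rw [integral_indicator_const _ measurableSet_Iic, smul_eq_mul, mul_one, Measure.real]
    rw [this]
    apply integral_mono (hint μ t') ((integrable_const 1).indicator measurableSet_Iic)
    intro u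
    by_cases hu : u ≤ t' + ε
    · rw [Set.indicator_of_mem (Set.mem_Iic.mpr hu)]; exact (hrange t' u).2
    · rw [Set.indicator_of_notMem (by simpa using hu), h0 t' u (le_of_not_ge hu)]
  -- bounds on integrals
  have int_mem : ∀ (μ : Measure ℝ) [IsProbabilityMeasure μ] (t' : ℝ),
      ∫ u, h t' u ∂μ ∈ Set.Icc (0 : ℝ) 1 := by
    intro μ _ t'
    constructor
    · exact integral_nonneg fun u => (hrange t' u).1
    · calc ∫ u, h t' u ∂μ ≤ ∫ _u, (1 : ℝ) ∂μ :=
            integral_mono (hint μ t') (integrable_const 1) fun u => (hrange t' u).2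
        _ = 1 := by simp
  have hbdd : BddAbove (Set.range fun t' : ℝ =>
      |(∫ u, h t' u ∂ν) - ∫ u, h t' u ∂γ|) := by
    refine ⟨2, ?_⟩
    rintro x ⟨t', rfl⟩
    have h1' := int_mem ν t'
    have h2' := int_mem γ t'
    rw [abs_sub_le_iff]
    constructor <;> linarith [h1'.1, h1'.2, h2'.1, h2'.2]
  have hS1 : |(∫ u, h (t + ε) u ∂ν) - ∫ u, h (t + ε) u ∂γ| ≤
      ⨆ t' : ℝ, |(∫ u, h t' u ∂ν) - ∫ u, h t' u ∂γ| := le_ciSup hbdd (t + ε)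
  have hS2 : |(∫ u, h (t - ε) u ∂ν) - ∫ u, h (t - ε) u ∂γ| ≤
      ⨆ t' : ℝ, |(∫ u, h t' u ∂ν) - ∫ u, h t' u ∂γ| := le_ciSup hbdd (t - ε)
  have hπ : 0 < Real.sqrt (2 * Real.pi) := Real.sqrt_pos.mpr (by positivity)
  rw [abs_sub_le_iff]
  constructor
  · -- ν(Iic t) - γ(Iic t) ≤ S + 4ε/√(2π)
    have e1 : (ν (Set.Iic t)).toReal ≤ ∫ u, h (t + ε) u ∂ν := by
      have := meas_le_int ν (t + ε)
      simpa using this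
    have e2 : ∫ u, h (t + ε) u ∂γ ≤ (γ (Set.Iic (t + 2 * ε))).toReal := by
      have := int_le_meas γ (t + ε)
      have heq : t + ε + ε = t + 2 * ε := by ring
      rwa [heq] at this
    have e3 := smoothing_gauss_inc t (t + 2 * ε) (by linarith)
    rw [← hγ] at e3
    have hq : t + 2 * ε - t = 2 * ε := by ring
    rw [hq] at e3
    have : (∫ u, h (t + ε) u ∂ν) - ∫ u, h (t + ε) u ∂γ ≤
        ⨆ t' : ℝ, |(∫ u, h t' u ∂ν) - ∫ u, h t' u ∂γ| :=
      le_trans (le_abs_self _) hS1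
    have h2le4 : 2 * ε / Real.sqrt (2 * Real.pi) ≤ 4 * ε / Real.sqrt (2 * Real.pi) := by
      gcongr <;> linarith
    linarith
  · -- γ(Iic t) - ν(Iic t) ≤ S + 4ε/√(2π)
    have e1 : ∫ u, h (t - ε) u ∂ν ≤ (ν (Set.Iic t)).toReal := by
      have := int_le_meas ν (t - ε)
      simpa using this
    have e2 : (γ (Set.Iic (t - 2 * ε))).toReal ≤ ∫ u, h (t - ε) u ∂γ := by
      have := meas_le_int γ (t - ε)
      have heq : t - ε - ε = t - 2 * ε := by ring
      rwa [heq] at this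
    have e3 := smoothing_gauss_inc (t - 2 * ε) t (by linarith)
    rw [← hγ] at e3
    have hq : t - (t - 2 * ε) = 2 * ε := by ring
    rw [hq] at e3
    have : (∫ u, h (t - ε) u ∂γ) - ∫ u, h (t - ε) u ∂ν ≤
        ⨆ t' : ℝ, |(∫ u, h t' u ∂ν) - ∫ u, h t' u ∂γ| := by
      refine le_trans ?_ hS2
      rw [abs_sub_comm]
      exact le_abs_self _
    have h2le4 : 2 * ε / Real.sqrt (2 * Real.pi) ≤ 4 * ε / Real.sqrt (2 * Real.pi) := by
      gcongr <;> linarith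
    linarith
end
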